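/- Let a ∈ ℝ \ {0,1} and η₁,…,η₇, ξ₁,…,ξ₇ ∈ ℝ. Define R(t) = η₁(t−1)²(t−a)² + η₂t²(t−a)² + η₃t²(t−1)² + η₄t²(t−1)²(t−a)² + η₅t(t−1)²(t−a)² + η₆t²(t−1)(t−a) + η₇t(t−1)(t−a), S(t) = ξ₁(t−1)²(t−a)² + ξ₂t²(t−a)² + ξ₃t²(t−1)² + ξ₄t²(t−1)²(t−a)² + ξ₅t(t−1)²(t−a)² + ξ₆t²(t−1)(t−a) + ξ₇t(t−1)(t−a), and G(t) = 3t² − 2(a+1)t + a. Let y be three times differentiable on an open interval I ⊆ ℝ with y'(x) ≠ 0, y(x) ∉ {0,1,a}, R(y(x)) ≠ 0, and (y'(x))² = 4·y(x)²·(y(x)−1)²·(y(x)−a)²/R(y(x)) for all x ∈ I. Then for every x ∈ I (writing y = y(x)): −S(y)/R(y) − (1/2)·{y,x}(x) = (y²(y−1)²(y−a)²/R(y)²)·[ R''(y) + (G(y)·R'(y) − 2·R(y)·G'(y))/(y(y−1)(y−a)) + R(y)·G(y)²/(y²(y−1)²(y−a)²) − (5/4)·R'(y)²/R(y) ] − S(y)/R(y).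 -/

import Mathlib

/-- The polynomial `R` of the generalized-Heun-class Bose invariant. -/
def gheunR (a η₁ η₂ η₃ η₄ η₅ η₆ η₇ : ℝ) : ℝ → ℝ := fun t =>
  η₁ * (t - 1) ^ 2 * (t - a) ^ 2 + η₂ * t ^ 2 * (t - a) ^ 2 + η₃ * t ^ 2 * (t - 1) ^ 2
    + η₄ * t ^ 2 * (t - 1) ^ 2 * (t - a) ^ 2 + η₅ * t * (t - 1) ^ 2 * (t - a) ^ 2
    + η₆ * t ^ 2 * (t - 1) * (t - a) + η₇ * t * (t - 1) * (t - a)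

/-- The polynomial `S` of the generalized-Heun-class Bose invariant. -/
def gheunS (a ξ₁ ξ₂ ξ₃ ξ₄ ξ₅ ξ₆ ξ₇ : ℝ) : ℝ → ℝ := fun t =>
  ξ₁ * (t - 1) ^ 2 * (t - a) ^ 2 + ξ₂ * t ^ 2 * (t - a) ^ 2 + ξ₃ * t ^ 2 * (t - 1) ^ 2
    + ξ₄ * t ^ 2 * (t - 1) ^ 2 * (t - a) ^ 2 + ξ₅ * t * (t - 1) ^ 2 * (t - a) ^ 2
    + ξ₆ * t ^ 2 * (t - 1) * (t - a) + ξ₇ * t * (t - 1) * (t - a)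

/-- `G(t) = 3t² − 2(a+1)t + a`. -/
def gheunG (a : ℝ) : ℝ → ℝ := fun t => 3 * t ^ 2 - 2 * (a + 1) * t + a

section gheunAux

/-- derivative of a degree-6 polynomial. -/
lemma hasDerivAt_poly6 (c0 c1 c2 c3 c4 c5 c6 x : ℝ) :
    HasDerivAt (fun t : ℝ => c0 + c1*t + c2*t^2 + c3*t^3 + c4*t^4 + c5*t^5 + c6*t^6)
      (c1 + 2*c2*x + 3*c3*x^2 + 4*c4*x^3 + 5*c5*x^4 + 6*c6*x^5) x := by
  have h := ((((((hasDerivAt_const x c0).add ((hasDerivAt_id' x).const_mul c1)).add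
      ((hasDerivAt_pow 2 x).const_mul c2)).add ((hasDerivAt_pow 3 x).const_mul c3)).add
      ((hasDerivAt_pow 4 x).const_mul c4)).add ((hasDerivAt_pow 5 x).const_mul c5)).add
      ((hasDerivAt_pow 6 x).const_mul c6)
  refine h.congr_deriv ?_
  push_cast
  ring

/-- derivative of a degree-5 polynomial. -/
lemma hasDerivAt_poly5 (c0 c1 c2 c3 c4 c5 x : ℝ) :
    HasDerivAt (fun t : ℝ => c0 + c1*t + c2*t^2 + c3*t^3 + c4*t^4 + c5*t^5)
      (c1 + 2*c2*x + 3*c3*x^2 + 4*c4*x^3 + 5*c5*x^4) x := by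
  have h := (((((hasDerivAt_const x c0).add ((hasDerivAt_id' x).const_mul c1)).add
      ((hasDerivAt_pow 2 x).const_mul c2)).add ((hasDerivAt_pow 3 x).const_mul c3)).add
      ((hasDerivAt_pow 4 x).const_mul c4)).add ((hasDerivAt_pow 5 x).const_mul c5)
  refine h.congr_deriv ?_
  push_cast
  ring

/-- monomial expansion of `gheunR`. -/
noncomputable def gheunP (a η₁ η₂ η₃ η₄ η₅ η₆ η₇ : ℝ) : ℝ → ℝ := fun t =>
  (η₁*a^2) + (η₁*(-2*a - 2*a^2) + η₅*a^2 + η₇*a)*t + (η₁*(1 + 4*a + a^2) + η₂*a^2 + η₃ + η₄*a^2 + η₅*(-2*a - 2*a^2) + η₆*a + η₇*(-1 - a))*t^2 + (η₁*(-2 - 2*a) + η₂*(-2*a) + η₃*(-2) + η₄*(-2*a - 2*a^2) + η₅*(1 + 4*a + a^2) + η₆*(-1 - a) + η₇)*t^3 + (η₁ + η₂ + η₃ + η₄*(1 + 4*a + a^2) + η₅*(-2 - 2*a) + η₆)*t^4 + (η₄*(-2 - 2*a) + η₅)*t^5 + (η₄)*t^6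

/-- first derivative of `gheunR`. -/
noncomputable def gheunRd (a η₁ η₂ η₃ η₄ η₅ η₆ η₇ : ℝ) : ℝ → ℝ := fun t =>
  (η₁*(-2*a - 2*a^2) + η₅*a^2 + η₇*a) + 2*(η₁*(1 + 4*a + a^2) + η₂*a^2 + η₃ + η₄*a^2 + η₅*(-2*a - 2*a^2) + η₆*a + η₇*(-1 - a))*t + 3*(η₁*(-2 - 2*a) + η₂*(-2*a) + η₃*(-2) + η₄*(-2*a - 2*a^2) + η₅*(1 + 4*a + a^2) + η₆*(-1 - a) + η₇)*t^2 + 4*(η₁ + η₂ + η₃ + η₄*(1 + 4*a + a^2) + η₅*(-2 - 2*a) + η₆)*t^3 + 5*(η₄*(-2 - 2*a) + η₅)*t^4 + 6*(η₄)*t^5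

/-- second derivative of `gheunR`. -/
noncomputable def gheunRdd (a η₁ η₂ η₃ η₄ η₅ η₆ η₇ : ℝ) : ℝ → ℝ := fun t =>
  (2*(η₁*(1 + 4*a + a^2) + η₂*a^2 + η₃ + η₄*a^2 + η₅*(-2*a - 2*a^2) + η₆*a + η₇*(-1 - a))) + 2*(3*(η₁*(-2 - 2*a) + η₂*(-2*a) + η₃*(-2) + η₄*(-2*a - 2*a^2) + η₅*(1 + 4*a + a^2) + η₆*(-1 - a) + η₇))*t + 3*(4*(η₁ + η₂ + η₃ + η₄*(1 + 4*a + a^2) + η₅*(-2 - 2*a) + η₆))*t^2 + 4*(5*(η₄*(-2 - 2*a) + η₅))*t^3 + 5*(6*(η₄))*t^4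

variable (a η₁ η₂ η₃ η₄ η₅ η₆ η₇ : ℝ)

lemma gheunR_eq_gheunP : gheunR a η₁ η₂ η₃ η₄ η₅ η₆ η₇ = gheunP a η₁ η₂ η₃ η₄ η₅ η₆ η₇ := by
  funext t
  simp only [gheunR, gheunP]
  ring

lemma hasDerivAt_gheunR (t : ℝ) :
    HasDerivAt (gheunR a η₁ η₂ η₃ η₄ η₅ η₆ η₇) (gheunRd a η₁ η₂ η₃ η₄ η₅ η₆ η₇ t) t := by
  rw [gheunR_eq_gheunP]
  unfold gheunP gheunRd
  exact hasDerivAt_poly6 _ _ _ _ _ _ _ t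

lemma hasDerivAt_gheunRd (t : ℝ) :
    HasDerivAt (gheunRd a η₁ η₂ η₃ η₄ η₅ η₆ η₇) (gheunRdd a η₁ η₂ η₃ η₄ η₅ η₆ η₇ t) t := by
  unfold gheunRd gheunRdd
  exact hasDerivAt_poly5 _ _ _ _ _ _ t

lemma deriv_gheunR_eq : deriv (gheunR a η₁ η₂ η₃ η₄ η₅ η₆ η₇) = gheunRd a η₁ η₂ η₃ η₄ η₅ η₆ η₇ :=
  funext fun t => (hasDerivAt_gheunR a η₁ η₂ η₃ η₄ η₅ η₆ η₇ t).deriv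

lemma deriv_gheunRd_eq : deriv (gheunRd a η₁ η₂ η₃ η₄ η₅ η₆ η₇) = gheunRdd a η₁ η₂ η₃ η₄ η₅ η₆ η₇ :=
  funext fun t => (hasDerivAt_gheunRd a η₁ η₂ η₃ η₄ η₅ η₆ η₇ t).deriv

lemma hasDerivAt_gheunG (t : ℝ) :
    HasDerivAt (gheunG a) (6*t - 2*(a+1)) t := by
  have h := (((hasDerivAt_pow 2 t).const_mul 3).sub
      ((hasDerivAt_id' t).const_mul (2*(a+1)))).add_const a
  have h2 : HasDerivAt (gheunG a) (3 * (↑2 * t ^ (2-1)) - 2*(a+1) * 1) t := h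
  convert h2 using 1
  push_cast
  ring

/-- the key algebraic identity. -/
lemma gheun_key (U U1 U2 R0 R1 R2 G0 G1 S0 p q r : ℝ) (hU : U ≠ 0) (hR0 : R0 ≠ 0)
    (hp : p ≠ 0) (hq : q ≠ 0) (hr : r ≠ 0)
    (h1 : U ^ 2 * R0 = 4 * p ^ 2 * q ^ 2 * r ^ 2)
    (hA : 2 * U1 * R0 + U ^ 2 * R1 - 8 * (p * q * r) * G0 = 0)
    (hB : 2 * U2 * R0 + 4 * U1 * U * R1 + U ^ 3 * R2
        - 8 * (G0 ^ 2 + p * q * r * G1) * U = 0) :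
    -S0 / R0 - 1 / 2 * ((U2 * U - U1 * U1) / U ^ 2 - 1 / 2 * (U1 / U) ^ 2)
      = p ^ 2 * q ^ 2 * r ^ 2 / R0 ^ 2 *
          (R2 + (G0 * R1 - 2 * R0 * G1) / (p * q * r)
            + R0 * G0 ^ 2 / (p ^ 2 * q ^ 2 * r ^ 2)
            - 5 / 4 * R1 ^ 2 / R0)
        - S0 / R0 := by
  have e1 : U1 = (8 * (p*q*r) * G0 - U^2*R1) / (2*R0) := by
    field_simp
    linear_combination hA
  have e2 : U2 = (8*(G0^2 + p*q*r*G1)*U - 4*U1*U*R1 - U^3*R2) / (2*R0) := by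
    field_simp
    linear_combination hB
  have e3 : R0 = 4*p^2*q^2*r^2 / U^2 := by
    field_simp
    linear_combination h1
  rw [e2, e1, e3]
  field_simp
  ring

end gheunAux

/-- closed form of the potential `V_GH` of the generalized Heun class. -/
theorem stmt_19 (a : ℝ) (ha0 : a ≠ 0) (ha1 : a ≠ 1)
    (η₁ η₂ η₃ η₄ η₅ η₆ η₇ ξ₁ ξ₂ ξ₃ ξ₄ ξ₅ ξ₆ ξ₇ : ℝ)
    (y : ℝ → ℝ) (I : Set ℝ) (hI : IsOpen I)
    (hy : ∀ x ∈ I, DifferentiableAt ℝ y x)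
    (hy' : ∀ x ∈ I, DifferentiableAt ℝ (deriv y) x)
    (hy'' : ∀ x ∈ I, DifferentiableAt ℝ (deriv (deriv y)) x)
    (hy0 : ∀ x ∈ I, deriv y x ≠ 0)
    (hy01a : ∀ x ∈ I, y x ≠ 0 ∧ y x ≠ 1 ∧ y x ≠ a)
    (hR : ∀ x ∈ I, gheunR a η₁ η₂ η₃ η₄ η₅ η₆ η₇ (y x) ≠ 0)
    (heq : ∀ x ∈ I, (deriv y x) ^ 2
      = 4 * (y x) ^ 2 * (y x - 1) ^ 2 * (y x - a) ^ 2
          / gheunR a η₁ η₂ η₃ η₄ η₅ η₆ η₇ (y x)) :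
    ∀ x ∈ I,
      -(gheunS a ξ₁ ξ₂ ξ₃ ξ₄ ξ₅ ξ₆ ξ₇ (y x)) / gheunR a η₁ η₂ η₃ η₄ η₅ η₆ η₇ (y x)
          - (1 / 2) * (deriv (fun t => deriv (deriv y) t / deriv y t) x
              - (1 / 2) * (deriv (deriv y) x / deriv y x) ^ 2)
        = ((y x) ^ 2 * (y x - 1) ^ 2 * (y x - a) ^ 2
              / (gheunR a η₁ η₂ η₃ η₄ η₅ η₆ η₇ (y x)) ^ 2) *
            (deriv (deriv (gheunR a η₁ η₂ η₃ η₄ η₅ η₆ η₇)) (y x)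
              + (gheunG a (y x) * deriv (gheunR a η₁ η₂ η₃ η₄ η₅ η₆ η₇) (y x)
                  - 2 * gheunR a η₁ η₂ η₃ η₄ η₅ η₆ η₇ (y x) * deriv (gheunG a) (y x))
                / (y x * (y x - 1) * (y x - a))
              + gheunR a η₁ η₂ η₃ η₄ η₅ η₆ η₇ (y x) * (gheunG a (y x)) ^ 2
                / ((y x) ^ 2 * (y x - 1) ^ 2 * (y x - a) ^ 2)
              - (5 / 4) * (deriv (gheunR a η₁ η₂ η₃ η₄ η₅ η₆ η₇) (y x)) ^ 2
                / gheunR a η₁ η₂ η₃ η₄ η₅ η₆ η₇ (y x))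
          - gheunS a ξ₁ ξ₂ ξ₃ ξ₄ ξ₅ ξ₆ ξ₇ (y x) / gheunR a η₁ η₂ η₃ η₄ η₅ η₆ η₇ (y x) := by
  intro x hx
  obtain ⟨h0x, h1x, hax⟩ := hy01a x hx
  have hq1 : y x - 1 ≠ 0 := sub_ne_zero.mpr h1x
  have hqa : y x - a ≠ 0 := sub_ne_zero.mpr hax
  have hU : deriv y x ≠ 0 := hy0 x hx
  have hR0 : gheunR a η₁ η₂ η₃ η₄ η₅ η₆ η₇ (y x) ≠ 0 := hR x hx
  -- Step A : first differentiation of the ODE, valid on all of I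
  have stepA : ∀ z ∈ I,
      2 * deriv (deriv y) z * gheunR a η₁ η₂ η₃ η₄ η₅ η₆ η₇ (y z)
        + (deriv y z) ^ 2 * gheunRd a η₁ η₂ η₃ η₄ η₅ η₆ η₇ (y z)
        - 8 * (y z * (y z - 1) * (y z - a) * gheunG a (y z)) = 0 := by
    intro z hz
    have hyz : HasDerivAt y (deriv y z) z := (hy z hz).hasDerivAt
    have hyz1 : HasDerivAt (deriv y) (deriv (deriv y) z) z := (hy' z hz).hasDerivAt
    have hcompR : HasDerivAt (fun s => gheunR a η₁ η₂ η₃ η₄ η₅ η₆ η₇ (y s))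
        (gheunRd a η₁ η₂ η₃ η₄ η₅ η₆ η₇ (y z) * deriv y z) z :=
      (hasDerivAt_gheunR a η₁ η₂ η₃ η₄ η₅ η₆ η₇ (y z)).comp z hyz
    have hf0 := ((hyz1.pow 2).mul hcompR).sub
      ((((hyz.pow 2).mul ((hyz.sub_const 1).pow 2)).mul
        ((hyz.sub_const a).pow 2)).const_mul 4)
    have hf : HasDerivAt (fun s => (deriv y s) ^ 2 * gheunR a η₁ η₂ η₃ η₄ η₅ η₆ η₇ (y s)
        - 4 * ((y s) ^ 2 * (y s - 1) ^ 2 * (y s - a) ^ 2)) _ z := hf0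
    have hEv : (fun s => (deriv y s) ^ 2 * gheunR a η₁ η₂ η₃ η₄ η₅ η₆ η₇ (y s)
        - 4 * ((y s) ^ 2 * (y s - 1) ^ 2 * (y s - a) ^ 2)) =ᶠ[nhds z] (fun _ => 0) := by
      filter_upwards [hI.mem_nhds hz] with s hs
      have h := heq s hs
      have hRs := hR s hs
      field_simp [hRs] at h
      linear_combination h
    have h0' : deriv (fun s => (deriv y s) ^ 2 * gheunR a η₁ η₂ η₃ η₄ η₅ η₆ η₇ (y s)
        - 4 * ((y s) ^ 2 * (y s - 1) ^ 2 * (y s - a) ^ 2)) z = 0 := by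
      rw [hEv.deriv_eq]
      exact deriv_const _ _
    have hD := hf.deriv.symm.trans h0'
    have h2 : deriv y z *
        (2 * deriv (deriv y) z * gheunR a η₁ η₂ η₃ η₄ η₅ η₆ η₇ (y z)
          + (deriv y z) ^ 2 * gheunRd a η₁ η₂ η₃ η₄ η₅ η₆ η₇ (y z)
          - 8 * (y z * (y z - 1) * (y z - a) * gheunG a (y z))) = 0 := by
      simp only [gheunG]
      push_cast at hD
      simp only [Pi.pow_apply, Pi.mul_apply] at hD
      linear_combination hD
    exact (mul_eq_zero.mp h2).resolve_left (hy0 z hz)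
  -- Step B : second differentiation at x
  have hyz : HasDerivAt y (deriv y x) x := (hy x hx).hasDerivAt
  have hyz1 : HasDerivAt (deriv y) (deriv (deriv y) x) x := (hy' x hx).hasDerivAt
  have hyz2 : HasDerivAt (deriv (deriv y)) (deriv (deriv (deriv y)) x) x :=
    (hy'' x hx).hasDerivAt
  have hcompR : HasDerivAt (fun s => gheunR a η₁ η₂ η₃ η₄ η₅ η₆ η₇ (y s))
      (gheunRd a η₁ η₂ η₃ η₄ η₅ η₆ η₇ (y x) * deriv y x) x :=
    (hasDerivAt_gheunR a η₁ η₂ η₃ η₄ η₅ η₆ η₇ (y x)).comp x hyz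
  have hcompRd : HasDerivAt (fun s => gheunRd a η₁ η₂ η₃ η₄ η₅ η₆ η₇ (y s))
      (gheunRdd a η₁ η₂ η₃ η₄ η₅ η₆ η₇ (y x) * deriv y x) x :=
    (hasDerivAt_gheunRd a η₁ η₂ η₃ η₄ η₅ η₆ η₇ (y x)).comp x hyz
  have hcompG : HasDerivAt (fun s => gheunG a (y s))
      ((6 * (y x) - 2 * (a + 1)) * deriv y x) x :=
    (hasDerivAt_gheunG a (y x)).comp x hyz
  have hg0 := (((hyz2.const_mul 2).mul hcompR).add ((hyz1.pow 2).mul hcompRd)).sub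
    ((((hyz.mul (hyz.sub_const 1)).mul (hyz.sub_const a)).mul hcompG).const_mul 8)
  have hg : HasDerivAt (fun z =>
      2 * deriv (deriv y) z * gheunR a η₁ η₂ η₃ η₄ η₅ η₆ η₇ (y z)
        + (deriv y z) ^ 2 * gheunRd a η₁ η₂ η₃ η₄ η₅ η₆ η₇ (y z)
        - 8 * (y z * (y z - 1) * (y z - a) * gheunG a (y z))) _ x := hg0
  have hEv2 : (fun z =>
      2 * deriv (deriv y) z * gheunR a η₁ η₂ η₃ η₄ η₅ η₆ η₇ (y z)
        + (deriv y z) ^ 2 * gheunRd a η₁ η₂ η₃ η₄ η₅ η₆ η₇ (y z)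
        - 8 * (y z * (y z - 1) * (y z - a) * gheunG a (y z))) =ᶠ[nhds x] (fun _ => 0) := by
    filter_upwards [hI.mem_nhds hx] with s hs
    exact stepA s hs
  have h0'' : deriv (fun z =>
      2 * deriv (deriv y) z * gheunR a η₁ η₂ η₃ η₄ η₅ η₆ η₇ (y z)
        + (deriv y z) ^ 2 * gheunRd a η₁ η₂ η₃ η₄ η₅ η₆ η₇ (y z)
        - 8 * (y z * (y z - 1) * (y z - a) * gheunG a (y z))) x = 0 := by
    rw [hEv2.deriv_eq]
    exact deriv_const _ _
  have hE0 := hg.deriv.symm.trans h0''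
  have hB : 2 * deriv (deriv (deriv y)) x * gheunR a η₁ η₂ η₃ η₄ η₅ η₆ η₇ (y x)
      + 4 * deriv (deriv y) x * deriv y x * gheunRd a η₁ η₂ η₃ η₄ η₅ η₆ η₇ (y x)
      + (deriv y x) ^ 3 * gheunRdd a η₁ η₂ η₃ η₄ η₅ η₆ η₇ (y x)
      - 8 * ((gheunG a (y x)) ^ 2
          + y x * (y x - 1) * (y x - a) * (6 * (y x) - 2 * (a + 1))) * deriv y x = 0 := by
    simp only [gheunG] at hE0 ⊢
    push_cast at hE0
    simp only [Pi.pow_apply, Pi.mul_apply] at hE0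
    linear_combination hE0
  have hA := stepA x hx
  have h1 : (deriv y x) ^ 2 * gheunR a η₁ η₂ η₃ η₄ η₅ η₆ η₇ (y x)
      = 4 * (y x) ^ 2 * (y x - 1) ^ 2 * (y x - a) ^ 2 := by
    have h := heq x hx
    field_simp [hR0] at h
    linear_combination h
  -- the Schwarzian quotient
  have hdiv : HasDerivAt (fun t => deriv (deriv y) t / deriv y t)
      ((deriv (deriv (deriv y)) x * deriv y x - deriv (deriv y) x * deriv (deriv y) x)
        / (deriv y x) ^ 2) x := hyz2.div hyz1 hU
  rw [hdiv.deriv, deriv_gheunR_eq, deriv_gheunRd_eq, (hasDerivAt_gheunG a (y x)).deriv]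
  have hkey := gheun_key (deriv y x) (deriv (deriv y) x) (deriv (deriv (deriv y)) x)
    (gheunR a η₁ η₂ η₃ η₄ η₅ η₆ η₇ (y x)) (gheunRd a η₁ η₂ η₃ η₄ η₅ η₆ η₇ (y x))
    (gheunRdd a η₁ η₂ η₃ η₄ η₅ η₆ η₇ (y x)) (gheunG a (y x)) (6 * (y x) - 2 * (a + 1))
    (gheunS a ξ₁ ξ₂ ξ₃ ξ₄ ξ₅ ξ₆ ξ₇ (y x)) (y x) (y x - 1) (y x - a)
    hU hR0 h0x hq1 hqa h1 (by linear_combination hA) (by linear_combination hB)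
  linear_combination hkey
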